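/- arXiv:1703.05794 — 7 statements merged into one kernel-verified Lean document; each statement's English description precedes it below -/
import Mathlib

section
/- Identifiability of the SIFA model under the general conditions (Proposition 2.1, first part): Fix K ≥ 2 and block dimensions p_1,…,p_K. Let θ = ({f_k}_{k=0}^K, V_0, V_1,…,V_K, Σ_0,…,Σ_K, σ_1²,…,σ_K²) with joint rank r_0 and individual ranks r_1,…,r_K, and θ̂ a second parameter set with ranks r̂_0,…,r̂_K, both satisfying the basic conditions, condition A1 and condition A2. If θ and θ̂ are observationally equivalent, i.e. μ⋆(x) = μ̂⋆(x) for every x ∈ ℝ^q and Σ⋆ = Σ̂⋆, then r̂_k = r_k for k = 0,1,…,K, σ̂_k² = σ_k² for k = 1,…,K, Σ̂_k = Σ_k for k = 0,1,…,K, and there exist diagonal matrices S_k whose diagonal entries are ±1 such that V̂_k = V_k S_k and f̂_k(x) = S_k f_k(x) for all x ∈ ℝ^q and all k = 0,1,…,K. -/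
open Matrix

/-- Block-diagonal matrix with diagonal blocks `V 1, …, V K`, realized on sigma types. -/
def blkdiag {K : ℕ} {p r : Fin K → ℕ}
    (V : (k : Fin K) → Matrix (Fin (p k)) (Fin (r k)) ℝ) :
    Matrix ((k : Fin K) × Fin (p k)) ((k : Fin K) × Fin (r k)) ℝ :=
  Matrix.of fun i j =>
    if h : i.1 = j.1 then V j.1 (cast (congrArg (fun k => Fin (p k)) h) i.2) j.2 else 0

set_option linter.unusedSectionVars false

variable {ι κ : Type*} [Fintype ι] [DecidableEq ι] [Fintype κ] [DecidableEq κ]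

lemma conj_diag_apply (A : Matrix ι κ ℝ) (d : κ → ℝ) (i i' : ι) :
    (A * diagonal d * Aᵀ) i i' = ∑ j, d j * (A i j * A i' j) := by
  have h1 : (A * diagonal d * Aᵀ) i i' = ∑ j, (A * diagonal d) i j * A i' j := by
    simp [Matrix.mul_apply]
  rw [h1]
  simp only [Matrix.mul_diagonal]
  congr 1; funext j; ring

lemma quad_conj (A : Matrix ι κ ℝ) (d : κ → ℝ) (v : ι → ℝ) :
    v ⬝ᵥ ((A * diagonal d * Aᵀ) *ᵥ v) = ∑ j, d j * ((Aᵀ *ᵥ v) j)^2 := by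
  rw [← Matrix.mulVec_mulVec, ← Matrix.mulVec_mulVec, Matrix.dotProduct_mulVec,
    ← Matrix.mulVec_transpose]
  simp only [dotProduct, Matrix.mulVec_diagonal]
  congr 1; funext j; ring

lemma sum_sq_zero {d x : κ → ℝ} (hd : ∀ j, 0 < d j)
    (h : ∑ j, d j * (x j)^2 = 0) : ∀ j, x j = 0 := by
  have h0 : ∀ j ∈ Finset.univ, 0 ≤ d j * (x j)^2 := fun j _ =>
    mul_nonneg (hd j).le (sq_nonneg _)
  intro j
  have := (Finset.sum_eq_zero_iff_of_nonneg h0).mp h j (Finset.mem_univ j)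
  have := (mul_eq_zero.mp this).resolve_left (hd j).ne'
  exact pow_eq_zero_iff (by norm_num) |>.mp this

/-- two PSD conjugations summing to zero are each zero -/
lemma conj_add_conj_eq_zero {κ' : Type*} [Fintype κ'] [DecidableEq κ']
    {A : Matrix ι κ ℝ} {B : Matrix ι κ' ℝ}
    {d : κ → ℝ} {e : κ' → ℝ} (hd : ∀ j, 0 < d j) (he : ∀ j, 0 < e j)
    (h : A * diagonal d * Aᵀ + B * diagonal e * Bᵀ = 0) : A = 0 := by
  ext i j
  have hii := congrFun (congrFun h i) i
  rw [Matrix.add_apply, conj_diag_apply, conj_diag_apply] at hii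
  have h1 : ∀ j, (0:ℝ) ≤ d j * (A i j * A i j) := fun j =>
    mul_nonneg (hd j).le (mul_self_nonneg _)
  have h2 : ∀ j, (0:ℝ) ≤ e j * (B i j * B i j) := fun j =>
    mul_nonneg (he j).le (mul_self_nonneg _)
  have hA : ∑ j, d j * (A i j)^2 = 0 := by
    have hle : (0:ℝ) ≤ ∑ j, d j * (A i j * A i j) := Finset.sum_nonneg fun j _ => h1 j
    have hle2 : (0:ℝ) ≤ ∑ j, e j * (B i j * B i j) := Finset.sum_nonneg fun j _ => h2 j
    have h3 : ∑ j, d j * (A i j * A i j) = 0 := by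
      simp only [Matrix.zero_apply] at hii; linarith
    simpa [sq] using h3
  have := sum_sq_zero hd hA j
  simpa using this

lemma mulVec_eq_sum_smul_col (W : Matrix ι κ ℝ) (g : κ → ℝ) :
    W *ᵥ g = ∑ j, g j • (Wᵀ j) := by
  funext i
  simp [Matrix.mulVec, dotProduct, Finset.sum_apply, mul_comm]

lemma mulVec_inj_of_li {W : Matrix ι κ ℝ}
    (h : LinearIndependent ℝ (fun j => Wᵀ j)) {v : κ → ℝ} (hv : W *ᵥ v = 0) : v = 0 := by
  have := Fintype.linearIndependent_iff.mp h v (by rw [← mulVec_eq_sum_smul_col, hv])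
  funext j; exact this j

lemma gram_isUnit (W : Matrix ι κ ℝ)
    (h : LinearIndependent ℝ (fun j => Wᵀ j)) : IsUnit (Wᵀ * W).det := by
  by_contra hdet
  obtain ⟨v, hv0, hv⟩ := (Matrix.exists_mulVec_eq_zero_iff (M := Wᵀ * W)).mpr
    (by simpa [isUnit_iff_ne_zero] using hdet)
  have h2 : W *ᵥ v = 0 := by
    have h4 : v ⬝ᵥ ((Wᵀ * W) *ᵥ v) = (W *ᵥ v) ⬝ᵥ (W *ᵥ v) := by
      rw [← Matrix.mulVec_mulVec, Matrix.dotProduct_mulVec, Matrix.vecMul_transpose]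
    rw [hv, dotProduct_zero] at h4
    exact dotProduct_self_eq_zero.mp h4.symm
  exact hv0 (mulVec_inj_of_li h h2)

lemma gram_left_inv (W : Matrix ι κ ℝ)
    (h : IsUnit (Wᵀ * W).det) : ((Wᵀ * W)⁻¹ * Wᵀ) * W = 1 := by
  rw [Matrix.mul_assoc]
  exact Matrix.nonsing_inv_mul _ h

lemma left_cancel {κ' : Type*} {W : Matrix ι κ ℝ} (h : IsUnit (Wᵀ * W).det)
    {X Y : Matrix κ κ' ℝ} (hXY : W * X = W * Y) : X = Y := by
  have h2 := congrArg (fun M => ((Wᵀ * W)⁻¹ * Wᵀ) * M) hXY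
  simpa [← Matrix.mul_assoc, gram_left_inv W h] using h2

lemma right_cancel {κ' : Type*} [Fintype κ'] [DecidableEq κ'] {W : Matrix ι κ ℝ} (h : IsUnit (Wᵀ * W).det)
    {X Y : Matrix κ' κ ℝ} (hXY : X * Wᵀ = Y * Wᵀ) : X = Y := by
  have := left_cancel h (X := Xᵀ) (Y := Yᵀ) (by
    have := congrArg Matrix.transpose hXY
    simpa [Matrix.transpose_mul] using this)
  have := congrArg Matrix.transpose this
  simpa using this

lemma exists_perp {P : ℕ} (N : Matrix (Fin P) κ ℝ) (h : Fintype.card κ < P) :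
    ∃ v : Fin P → ℝ, v ≠ 0 ∧ Nᵀ *ᵥ v = 0 := by
  by_cases hker : LinearMap.ker (Matrix.mulVecLin Nᵀ) = ⊥
  · exfalso
    have hinj := LinearMap.ker_eq_bot.mp hker
    have hle := LinearMap.finrank_le_finrank_of_injective hinj
    simp only [Module.finrank_fintype_fun_eq_card, Fintype.card_fin] at hle
    omega
  · obtain ⟨v, hv, hv0⟩ := Submodule.exists_mem_ne_zero_of_ne_bot hker
    exact ⟨v, hv0, hv⟩

lemma dotProduct_self_pos' {v : ι → ℝ} (hv : v ≠ 0) : 0 < v ⬝ᵥ v := by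
  have hnn : 0 ≤ v ⬝ᵥ v := Finset.sum_nonneg fun i _ => mul_self_nonneg (v i)
  rcases lt_or_eq_of_le hnn with h | h
  · exact h
  · exact absurd (dotProduct_self_eq_zero.mp h.symm) hv

lemma conj_conj {a P : ℕ} (L : Matrix (Fin a) (Fin P) ℝ) (W : Matrix (Fin P) κ ℝ) (D : κ → ℝ) :
    L * (W * diagonal D * Wᵀ) * Lᵀ = (L * W) * diagonal D * (L * W)ᵀ := by
  simp only [Matrix.transpose_mul, Matrix.mul_assoc]

lemma left_inv_split {P : ℕ} {a b : Type*} [Fintype a] [Fintype b] [DecidableEq a] [DecidableEq b]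
    (A : Matrix (Fin P) a ℝ) (B : Matrix (Fin P) b ℝ)
    (L : Matrix (a ⊕ b) (Fin P) ℝ) (h : L * Matrix.fromCols A B = 1) :
    (L.submatrix Sum.inl id) * A = 1 ∧ (L.submatrix Sum.inl id) * B = 0 ∧
    (L.submatrix Sum.inr id) * A = 0 ∧ (L.submatrix Sum.inr id) * B = 1 := by
  refine ⟨?_, ?_, ?_, ?_⟩ <;> ext i j
  · have := congrFun (congrFun h (Sum.inl i)) (Sum.inl j)
    simpa [Matrix.mul_apply, Matrix.one_apply, Matrix.fromCols] using this
  · have := congrFun (congrFun h (Sum.inl i)) (Sum.inr j)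
    simpa [Matrix.mul_apply, Matrix.one_apply, Matrix.fromCols] using this
  · have := congrFun (congrFun h (Sum.inr i)) (Sum.inl j)
    simpa [Matrix.mul_apply, Matrix.one_apply, Matrix.fromCols] using this
  · have := congrFun (congrFun h (Sum.inr i)) (Sum.inr j)
    simpa [Matrix.mul_apply, Matrix.one_apply, Matrix.fromCols] using this

lemma li_fromColumns_left {P : ℕ} {a b : Type*} [Fintype a] [Fintype b] [DecidableEq a] [DecidableEq b]
    {A : Matrix (Fin P) a ℝ} {B : Matrix (Fin P) b ℝ}
    (h : LinearIndependent ℝ (fun j => (Matrix.fromCols A B)ᵀ j)) :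
    LinearIndependent ℝ (fun j => Aᵀ j) :=
  h.comp Sum.inl Sum.inl_injective

lemma mulVec_reindex {a b : ℕ} (h : a = b) (M : Matrix ι (Fin b) ℝ) (g : Fin b → ℝ) :
    M *ᵥ g = (M.submatrix id (Fin.cast h)) *ᵥ (fun j => g (Fin.cast h j)) := by
  funext i
  simp only [Matrix.mulVec, dotProduct, Matrix.submatrix_apply, id]
  exact (Fintype.sum_equiv (finCongr h) _ _ (fun j => rfl)).symm

open Matrix
set_option linter.unusedSectionVars false
set_option maxHeartbeats 1000000

variable {ι : Type*} [Fintype ι] [DecidableEq ι]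

lemma spec_half {m n : ℕ} (V : Matrix ι (Fin m) ℝ) (W : Matrix ι (Fin n) ℝ)
    (hV : Vᵀ * V = 1) (hW : Wᵀ * W = 1)
    (d : Fin m → ℝ) (e : Fin n → ℝ) (hepos : ∀ i, 0 < e i)
    (heq : V * diagonal d * Vᵀ = W * diagonal e * Wᵀ) :
    W = V * (Vᵀ * W) ∧ (Vᵀ * W)ᵀ * (Vᵀ * W) = 1 ∧
      ∀ i j, d i * (Vᵀ * W) i j = (Vᵀ * W) i j * e j := by
  have e1 : Vᵀ * (V * diagonal d * Vᵀ) * W = diagonal d * (Vᵀ * W) := by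
    calc Vᵀ * (V * diagonal d * Vᵀ) * W = (Vᵀ * V) * (diagonal d * (Vᵀ * W)) := by
          simp only [Matrix.mul_assoc]
      _ = diagonal d * (Vᵀ * W) := by rw [hV, Matrix.one_mul]
  have e2 : Vᵀ * (W * diagonal e * Wᵀ) * W = (Vᵀ * W) * diagonal e := by
    calc Vᵀ * (W * diagonal e * Wᵀ) * W = (Vᵀ * W) * (diagonal e * (Wᵀ * W)) := by
          simp only [Matrix.mul_assoc]
      _ = (Vᵀ * W) * diagonal e := by rw [hW, Matrix.mul_one]
  have hcomm : diagonal d * (Vᵀ * W) = (Vᵀ * W) * diagonal e := by rw [← e1, heq, e2]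
  have e3 : (W * diagonal e * Wᵀ) * W = W * diagonal e := by
    calc (W * diagonal e * Wᵀ) * W = W * (diagonal e * (Wᵀ * W)) := by
          simp only [Matrix.mul_assoc]
      _ = W * diagonal e := by rw [hW, Matrix.mul_one]
  have e4 : (V * diagonal d * Vᵀ) * W = (V * (Vᵀ * W)) * diagonal e := by
    calc (V * diagonal d * Vᵀ) * W = V * (diagonal d * (Vᵀ * W)) := by
          simp only [Matrix.mul_assoc]
      _ = V * ((Vᵀ * W) * diagonal e) := by rw [hcomm]
      _ = (V * (Vᵀ * W)) * diagonal e := by rw [← Matrix.mul_assoc]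
  have e5 : W * diagonal e = (V * (Vᵀ * W)) * diagonal e := by rw [← e3, ← heq]; exact e4
  have hWVB : W = V * (Vᵀ * W) := by
    ext i j
    have h := congrFun (congrFun e5 i) j
    rw [Matrix.mul_diagonal, Matrix.mul_diagonal] at h
    exact mul_right_cancel₀ (hepos j).ne' h
  refine ⟨hWVB, ?_, fun i j => by
    have h := congrFun (congrFun hcomm i) j
    rwa [Matrix.diagonal_mul, Matrix.mul_diagonal] at h⟩
  have hfin : Wᵀ * W = (Vᵀ * W)ᵀ * (Vᵀ * W) := by
    conv_lhs => rw [hWVB]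
    calc (V * (Vᵀ * W))ᵀ * (V * (Vᵀ * W)) = (Vᵀ * W)ᵀ * ((Vᵀ * V) * (Vᵀ * W)) := by
          simp only [Matrix.transpose_mul, Matrix.mul_assoc, Matrix.transpose_transpose]
      _ = (Vᵀ * W)ᵀ * (Vᵀ * W) := by rw [hV, Matrix.one_mul]
  rw [← hfin, hW]

lemma spectral_unique {m n : ℕ} (V : Matrix ι (Fin m) ℝ) (W : Matrix ι (Fin n) ℝ)
    (hV : Vᵀ * V = 1) (hW : Wᵀ * W = 1)
    {d : Fin m → ℝ} {e : Fin n → ℝ}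
    (hdanti : StrictAnti d) (hdpos : ∀ i, 0 < d i)
    (heanti : StrictAnti e) (hepos : ∀ i, 0 < e i)
    (heq : V * diagonal d * Vᵀ = W * diagonal e * Wᵀ) :
    ∃ h : n = m, (∀ i : Fin m, e (Fin.cast h.symm i) = d i) ∧
      ∃ s : Fin m → ℝ, (∀ i, s i = 1 ∨ s i = -1) ∧
        W.submatrix id (Fin.cast h.symm) = V * diagonal s := by
  obtain ⟨hWVB, hBtB, hent⟩ := spec_half V W hV hW d e hepos heq
  obtain ⟨hVWB, hBBt', hent'⟩ := spec_half W V hW hV e d hdpos heq.symm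
  set B := Vᵀ * W with hB
  have hB2 : Wᵀ * V = Bᵀ := by rw [hB, Matrix.transpose_mul, Matrix.transpose_transpose]
  have hBBt : B * Bᵀ = 1 := by
    have := hBBt'
    rwa [hB2, Matrix.transpose_transpose] at this
  -- m = n
  have hmn : n = m := by
    have ht : ((n : ℝ)) = (m : ℝ) := by
      have h1 : Matrix.trace (Bᵀ * B) = (n : ℝ) := by rw [hBtB, Matrix.trace_one]; simp
      have h2 : Matrix.trace (B * Bᵀ) = (m : ℝ) := by rw [hBBt, Matrix.trace_one]; simp
      rw [← h1, ← h2, Matrix.trace_mul_comm]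
    exact_mod_cast ht
  subst hmn
  refine ⟨rfl, ?_⟩
  have hcast : ∀ i : Fin n, Fin.cast (rfl : n = n).symm i = i := fun i => rfl
  -- ranges
  have hrow : ∀ i, ∃ j, B i j ≠ 0 := by
    intro i
    by_contra hc
    push_neg at hc
    have h := congrFun (congrFun hBBt i) i
    rw [Matrix.mul_apply] at h
    simp only [transpose_apply, Matrix.one_apply_eq] at h
    rw [Finset.sum_eq_zero (fun j _ => by rw [hc j, zero_mul])] at h
    norm_num at h
  have hcol : ∀ j, ∃ i, B i j ≠ 0 := by
    intro j
    by_contra hc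
    push_neg at hc
    have h := congrFun (congrFun hBtB j) j
    rw [Matrix.mul_apply] at h
    simp only [transpose_apply, Matrix.one_apply_eq] at h
    rw [Finset.sum_eq_zero (fun i _ => by rw [hc i, zero_mul])] at h
    norm_num at h
  have hde : d = e := by
    refine (hdanti.range_inj heanti).mp ?_
    ext x
    constructor
    · rintro ⟨i, rfl⟩
      obtain ⟨j, hj⟩ := hrow i
      have h := hent i j
      have h' : d i * B i j = e j * B i j := by linarith
      exact ⟨j, (mul_right_cancel₀ hj h').symm⟩
    · rintro ⟨j, rfl⟩
      obtain ⟨i, hi⟩ := hcol j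
      have h := hent i j
      have h' : d i * B i j = e j * B i j := by linarith
      exact ⟨i, mul_right_cancel₀ hi h'⟩
  subst hde
  have hBdiag : ∀ i j, i ≠ j → B i j = 0 := by
    intro i j hij
    by_contra hc
    have h := hent i j
    have : d i = d j := by
      have : d i * B i j = d j * B i j := by linarith [h]
      exact mul_right_cancel₀ hc this
    exact hij (hdanti.injective this)
  set s : Fin n → ℝ := fun i => B i i with hs
  have hBes : B = diagonal s := by
    ext i j
    rw [Matrix.diagonal_apply]
    by_cases hij : i = j
    · subst hij; simp [hs]
    · rw [if_neg hij]; exact hBdiag i j hij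
  have hsq : ∀ i, s i = 1 ∨ s i = -1 := by
    intro i
    have h := congrFun (congrFun hBtB i) i
    rw [Matrix.mul_apply] at h
    simp only [transpose_apply, Matrix.one_apply_eq] at h
    rw [Finset.sum_eq_single i (fun j _ hj => by
      rw [hBdiag j i hj, zero_mul]) (by simp)] at h
    exact mul_self_eq_one_iff.mp (by rw [hs]; exact h)
  refine ⟨fun i => rfl, s, hsq, ?_⟩
  have : W.submatrix id (Fin.cast (rfl : n = n).symm) = W := by
    ext i j; simp [Matrix.submatrix_apply, hcast]
  rw [this, hWVB, hBes]

namespace SIFA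
open Matrix
variable {K : ℕ} {p r : Fin K → ℕ}

lemma blkdiag_apply_same (V : (k : Fin K) → Matrix (Fin (p k)) (Fin (r k)) ℝ)
    (k : Fin K) (i : Fin (p k)) (j : Fin (r k)) : blkdiag V ⟨k, i⟩ ⟨k, j⟩ = V k i j := by
  simp [blkdiag]

lemma blkdiag_apply_ne (V : (k : Fin K) → Matrix (Fin (p k)) (Fin (r k)) ℝ)
    {k m : Fin K} (h : k ≠ m) (i : Fin (p k)) (j : Fin (r m)) :
    blkdiag V ⟨k, i⟩ ⟨m, j⟩ = 0 := by
  simp only [blkdiag, Matrix.of_apply]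
  exact dif_neg h

lemma blkdiag_conj_same (V : (k : Fin K) → Matrix (Fin (p k)) (Fin (r k)) ℝ)
    (D : ((k : Fin K) × Fin (r k)) → ℝ) (k : Fin K) (i j : Fin (p k)) :
    (blkdiag V * Matrix.diagonal D * (blkdiag V)ᵀ) ⟨k, i⟩ ⟨k, j⟩
      = (V k * Matrix.diagonal (fun l => D ⟨k, l⟩) * (V k)ᵀ) i j := by
  rw [conj_diag_apply, conj_diag_apply, ← Finset.univ_sigma_univ, Finset.sum_sigma]
  rw [Finset.sum_eq_single k]
  · exact Finset.sum_congr rfl fun l _ => by rw [blkdiag_apply_same, blkdiag_apply_same]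
  · intro m _ hm
    exact Finset.sum_eq_zero fun l _ => by
      rw [blkdiag_apply_ne V (Ne.symm hm) i l, blkdiag_apply_ne V (Ne.symm hm) j l]
      ring
  · intro hk; exact absurd (Finset.mem_univ k) hk

lemma blkdiag_conj_ne (V : (k : Fin K) → Matrix (Fin (p k)) (Fin (r k)) ℝ)
    (D : ((k : Fin K) × Fin (r k)) → ℝ) {k k' : Fin K} (h : k ≠ k')
    (i : Fin (p k)) (j : Fin (p k')) :
    (blkdiag V * Matrix.diagonal D * (blkdiag V)ᵀ) ⟨k, i⟩ ⟨k', j⟩ = 0 := by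
  rw [conj_diag_apply]
  refine Finset.sum_eq_zero fun l _ => ?_
  rcases eq_or_ne k l.1 with hk | hk
  · have h' : k' ≠ l.1 := fun hc => h (hk.trans hc.symm)
    obtain ⟨l1, l2⟩ := l
    rw [blkdiag_apply_ne V h' j l2]
    ring
  · obtain ⟨l1, l2⟩ := l
    rw [blkdiag_apply_ne V hk i l2]
    ring

lemma diagonal_sigma_same (g : Fin K → ℝ) (k : Fin K) (i j : Fin (p k)) :
    (Matrix.diagonal (fun i : (k : Fin K) × Fin (p k) => g i.1)) ⟨k, i⟩ ⟨k, j⟩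
      = (g k • (1 : Matrix (Fin (p k)) (Fin (p k)) ℝ)) i j := by
  rw [Matrix.diagonal_apply, Matrix.smul_apply, Matrix.one_apply]
  by_cases hij : i = j
  · subst hij; simp
  · rw [if_neg (by simp [hij]), if_neg hij, smul_zero]

lemma diagonal_sigma_ne (g : Fin K → ℝ) {k k' : Fin K} (h : k ≠ k') (i : Fin (p k))
    (j : Fin (p k')) :
    (Matrix.diagonal (fun i : (k : Fin K) × Fin (p k) => g i.1)) ⟨k, i⟩ ⟨k', j⟩ = 0 := by
  rw [Matrix.diagonal_apply, if_neg fun hc => h (congrArg Sigma.fst hc)]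

lemma blkdiag_mulVec (V : (k : Fin K) → Matrix (Fin (p k)) (Fin (r k)) ℝ)
    (g : ((k : Fin K) × Fin (r k)) → ℝ) (k : Fin K) (i : Fin (p k)) :
    (blkdiag V *ᵥ g) ⟨k, i⟩ = (V k *ᵥ fun l => g ⟨k, l⟩) i := by
  show ∑ l : (k : Fin K) × Fin (r k), blkdiag V ⟨k, i⟩ l * g l = _
  rw [← Finset.univ_sigma_univ, Finset.sum_sigma, Finset.sum_eq_single k]
  · exact Finset.sum_congr rfl fun l _ => by rw [blkdiag_apply_same]
  · intro m _ hm
    exact Finset.sum_eq_zero fun l _ => by rw [blkdiag_apply_ne V (Ne.symm hm) i l, zero_mul]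
  · intro hk; exact absurd (Finset.mem_univ k) hk

end SIFA

namespace SIFA
open Matrix

lemma sigma_le {P a b c e : ℕ}
    (W0 : Matrix (Fin P) (Fin a) ℝ) (Vk : Matrix (Fin P) (Fin b) ℝ)
    (Wh0 : Matrix (Fin P) (Fin c) ℝ) (Vhk : Matrix (Fin P) (Fin e) ℝ)
    {d0 : Fin a → ℝ} {dk : Fin b → ℝ} {dh0 : Fin c → ℝ} {dhk : Fin e → ℝ}
    {σk σhk : ℝ}
    (hdh0 : ∀ i, 0 ≤ dh0 i) (hdhk : ∀ i, 0 ≤ dhk i)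
    (hlt : a + b < P)
    (heq : W0 * Matrix.diagonal d0 * W0ᵀ + Vk * Matrix.diagonal dk * Vkᵀ
        + σk • (1 : Matrix (Fin P) (Fin P) ℝ)
      = Wh0 * Matrix.diagonal dh0 * Wh0ᵀ + Vhk * Matrix.diagonal dhk * Vhkᵀ + σhk • 1) :
    σhk ≤ σk := by
  obtain ⟨v, hv0, hvperp⟩ := exists_perp (Matrix.fromCols W0 Vk) (by simpa using hlt)
  have hv1 : W0ᵀ *ᵥ v = 0 := funext fun j => congrFun hvperp (Sum.inl j)
  have hv2 : Vkᵀ *ᵥ v = 0 := funext fun j => congrFun hvperp (Sum.inr j)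
  have hq := congrArg (fun M => v ⬝ᵥ (M *ᵥ v)) heq
  simp only [Matrix.add_mulVec, dotProduct_add] at hq
  rw [quad_conj, quad_conj, quad_conj, quad_conj, hv1, hv2] at hq
  have hsm : ∀ cc : ℝ, v ⬝ᵥ ((cc • (1 : Matrix (Fin P) (Fin P) ℝ)) *ᵥ v) = cc * (v ⬝ᵥ v) := by
    intro cc
    rw [Matrix.smul_mulVec, Matrix.one_mulVec, dotProduct_smul, smul_eq_mul]
  rw [hsm, hsm] at hq
  simp only [Pi.zero_apply, ne_eq, OfNat.ofNat_ne_zero, not_false_eq_true, zero_pow,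
    mul_zero, Finset.sum_const_zero, zero_add] at hq
  have h1 : 0 ≤ ∑ j, dh0 j * ((Wh0ᵀ *ᵥ v) j)^2 :=
    Finset.sum_nonneg fun j _ => mul_nonneg (hdh0 j) (sq_nonneg _)
  have h2 : 0 ≤ ∑ j, dhk j * ((Vhkᵀ *ᵥ v) j)^2 :=
    Finset.sum_nonneg fun j _ => mul_nonneg (hdhk j) (sq_nonneg _)
  have hvv : 0 < v ⬝ᵥ v := dotProduct_self_pos' hv0
  nlinarith

end SIFA

def blockOf {K : ℕ} {p : Fin K → ℕ} {n : Type*}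
    (M : Matrix ((k : Fin K) × Fin (p k)) n ℝ) (k : Fin K) : Matrix (Fin (p k)) n ℝ :=
  Matrix.of fun i j => M ⟨k, i⟩ j

namespace SIFA
open Matrix
variable {K : ℕ} {p : Fin K → ℕ}

example {n : ℕ} (M : Matrix ((k : Fin K) × Fin (p k)) (Fin n) ℝ) (D : Fin n → ℝ)
    (k k' : Fin K) (i : Fin (p k)) (j : Fin (p k')) :
    (M * Matrix.diagonal D * Mᵀ) ⟨k, i⟩ ⟨k', j⟩
      = (blockOf M k * Matrix.diagonal D * (blockOf M k')ᵀ) i j := rfl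

example {n : ℕ} (M : Matrix ((k : Fin K) × Fin (p k)) (Fin n) ℝ) (g : Fin n → ℝ)
    (k : Fin K) (i : Fin (p k)) : (M *ᵥ g) ⟨k, i⟩ = (blockOf M k *ᵥ g) i := rfl

end SIFA

/-- Identifiability of the SIFA model under the general conditions (Proposition 2.1, first
part): if two parameter sets `θ` and `θ̂`, both satisfying the basic conditions and
conditions A1, A2, are observationally equivalent (equal mean function `μ⋆` and equal grand
covariance `Σ⋆`), then they have the same ranks, the same noise variances, the same diagonal
covariances, and the loadings and mean functions agree up to diagonal sign matrices `Sₖ`: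
`V̂ₖ = Vₖ Sₖ` and `f̂ₖ(x) = Sₖ fₖ(x)`. -/
theorem stmt_0 {K q : ℕ} (hK : 2 ≤ K) {p : Fin K → ℕ}
    {r0 : ℕ} {r : Fin K → ℕ} {rh0 : ℕ} {rh : Fin K → ℕ}
    -- parameter set θ
    (V0 : Matrix ((k : Fin K) × Fin (p k)) (Fin r0) ℝ)
    (V : (k : Fin K) → Matrix (Fin (p k)) (Fin (r k)) ℝ)
    (d0 : Fin r0 → ℝ) (d : (k : Fin K) → Fin (r k) → ℝ)
    (σ : Fin K → ℝ)
    (f0 : (Fin q → ℝ) → Fin r0 → ℝ) (f : (k : Fin K) → (Fin q → ℝ) → Fin (r k) → ℝ)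
    -- parameter set θ̂
    (Vh0 : Matrix ((k : Fin K) × Fin (p k)) (Fin rh0) ℝ)
    (Vh : (k : Fin K) → Matrix (Fin (p k)) (Fin (rh k)) ℝ)
    (dh0 : Fin rh0 → ℝ) (dh : (k : Fin K) → Fin (rh k) → ℝ)
    (σh : Fin K → ℝ)
    (fh0 : (Fin q → ℝ) → Fin rh0 → ℝ) (fh : (k : Fin K) → (Fin q → ℝ) → Fin (rh k) → ℝ)
    -- basic conditions for θ
    (hV0 : V0ᵀ * V0 = 1) (hV : ∀ k, (V k)ᵀ * V k = 1)
    (hd0anti : StrictAnti d0) (hd0pos : ∀ i, 0 < d0 i)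
    (hdanti : ∀ k, StrictAnti (d k)) (hdpos : ∀ k i, 0 < d k i)
    (hσ : ∀ k, 0 < σ k)
    -- condition A1 for θ: each block of V₀ has full column rank
    (hA1 : ∀ k, (Matrix.of fun (i : Fin (p k)) j => V0 ⟨k, i⟩ j).rank = r0)
    -- condition A2 for θ
    (hA2 : ∀ k, LinearIndependent ℝ
        (fun j => (Matrix.fromCols (Matrix.of fun (i : Fin (p k)) l => V0 ⟨k, i⟩ l)
          (V k))ᵀ j)
      ∧ r0 + r k < p k)
    -- basic conditions for θ̂
    (hVh0 : Vh0ᵀ * Vh0 = 1) (hVh : ∀ k, (Vh k)ᵀ * Vh k = 1)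
    (hdh0anti : StrictAnti dh0) (hdh0pos : ∀ i, 0 < dh0 i)
    (hdhanti : ∀ k, StrictAnti (dh k)) (hdhpos : ∀ k i, 0 < dh k i)
    (hσh : ∀ k, 0 < σh k)
    -- condition A1 for θ̂
    (hA1h : ∀ k, (Matrix.of fun (i : Fin (p k)) j => Vh0 ⟨k, i⟩ j).rank = rh0)
    -- condition A2 for θ̂
    (hA2h : ∀ k, LinearIndependent ℝ
        (fun j => (Matrix.fromCols (Matrix.of fun (i : Fin (p k)) l => Vh0 ⟨k, i⟩ l)
          (Vh k))ᵀ j)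
      ∧ rh0 + rh k < p k)
    -- observational equivalence: equal grand covariance Σ⋆
    (hcov : V0 * Matrix.diagonal d0 * V0ᵀ
        + blkdiag V * Matrix.diagonal (fun j : (k : Fin K) × Fin (r k) => d j.1 j.2)
          * (blkdiag V)ᵀ
        + Matrix.diagonal (fun i : (k : Fin K) × Fin (p k) => σ i.1)
      = Vh0 * Matrix.diagonal dh0 * Vh0ᵀ
        + blkdiag Vh * Matrix.diagonal (fun j : (k : Fin K) × Fin (rh k) => dh j.1 j.2)
          * (blkdiag Vh)ᵀ
        + Matrix.diagonal (fun i : (k : Fin K) × Fin (p k) => σh i.1))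
    -- observational equivalence: equal mean function μ⋆
    (hmean : ∀ x : Fin q → ℝ,
      V0 *ᵥ f0 x + blkdiag V *ᵥ (fun j => f j.1 x j.2)
        = Vh0 *ᵥ fh0 x + blkdiag Vh *ᵥ (fun j => fh j.1 x j.2)) :
    ∃ (h0 : rh0 = r0) (hk : ∀ k, rh k = r k),
      (∀ k, σh k = σ k) ∧
      (∀ i : Fin r0, dh0 (Fin.cast h0.symm i) = d0 i) ∧
      (∀ k (i : Fin (r k)), dh k (Fin.cast (hk k).symm i) = d k i) ∧
      ∃ (s0 : Fin r0 → ℝ) (s : (k : Fin K) → Fin (r k) → ℝ),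
        (∀ i, s0 i = 1 ∨ s0 i = -1) ∧
        (∀ k i, s k i = 1 ∨ s k i = -1) ∧
        Vh0.submatrix id (Fin.cast h0.symm) = V0 * Matrix.diagonal s0 ∧
        (∀ k, (Vh k).submatrix id (Fin.cast (hk k).symm)
          = V k * Matrix.diagonal (s k)) ∧
        (∀ x (i : Fin r0), fh0 x (Fin.cast h0.symm i) = s0 i * f0 x i) ∧
        (∀ k x (i : Fin (r k)),
          fh k x (Fin.cast (hk k).symm i) = s k i * f k x i) := by
  classical
  have hK0 : (0 : ℕ) < K := by omega
  have hK1 : (1 : ℕ) < K := by omega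
  -- left inverses for [V0ₖ Vₖ] and the hat version
  have hLex : ∀ k, ∃ Lk : Matrix (Fin r0 ⊕ Fin (r k)) (Fin (p k)) ℝ,
      Lk * Matrix.fromCols (blockOf V0 k) (V k) = 1 :=
    fun k => ⟨_, gram_left_inv _ (gram_isUnit _ (hA2 k).1)⟩
  choose L hLN using hLex
  have hLhex : ∀ k, ∃ Lk : Matrix (Fin rh0 ⊕ Fin (rh k)) (Fin (p k)) ℝ,
      Lk * Matrix.fromCols (blockOf Vh0 k) (Vh k) = 1 :=
    fun k => ⟨_, gram_left_inv _ (gram_isUnit _ (hA2h k).1)⟩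
  choose Lh hLhN using hLhex
  -- Gram determinants of single blocks
  have hGW0 : ∀ k, IsUnit ((blockOf V0 k)ᵀ * blockOf V0 k).det :=
    fun k => gram_isUnit _ (li_fromColumns_left (hA2 k).1)
  have hGWh0 : ∀ k, IsUnit ((blockOf Vh0 k)ᵀ * blockOf Vh0 k).det :=
    fun k => gram_isUnit _ (li_fromColumns_left (hA2h k).1)
  -- block equations from the covariance equality
  have hoffk : ∀ k k', k ≠ k' →
      blockOf V0 k * Matrix.diagonal d0 * (blockOf V0 k')ᵀ
        = blockOf Vh0 k * Matrix.diagonal dh0 * (blockOf Vh0 k')ᵀ := by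
    intro k k' hne
    ext i j
    have h := congrFun (congrFun hcov ⟨k, i⟩) ⟨k', j⟩
    simp only [Matrix.add_apply] at h
    rw [SIFA.blkdiag_conj_ne V _ hne, SIFA.blkdiag_conj_ne Vh _ hne,
      SIFA.diagonal_sigma_ne σ hne, SIFA.diagonal_sigma_ne σh hne] at h
    simp at h; exact h
  have hdiagk : ∀ k,
      blockOf V0 k * Matrix.diagonal d0 * (blockOf V0 k)ᵀ
          + V k * Matrix.diagonal (d k) * (V k)ᵀ + σ k • 1
        = blockOf Vh0 k * Matrix.diagonal dh0 * (blockOf Vh0 k)ᵀ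
          + Vh k * Matrix.diagonal (dh k) * (Vh k)ᵀ + σh k • 1 := by
    intro k
    ext i j
    have h := congrFun (congrFun hcov ⟨k, i⟩) ⟨k, j⟩
    simp only [Matrix.add_apply] at h
    rw [SIFA.blkdiag_conj_same V _ k i j, SIFA.blkdiag_conj_same Vh _ k i j,
      SIFA.diagonal_sigma_same σ k i j, SIFA.diagonal_sigma_same σh k i j] at h
    simp at h; exact h
  -- noise variances agree
  have hsig : ∀ k, σh k = σ k := by
    intro k
    have h1 : σh k ≤ σ k := SIFA.sigma_le _ _ _ _ (fun i => (hdh0pos i).le)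
      (fun i => (hdhpos k i).le) (hA2 k).2 (hdiagk k)
    have h2 : σ k ≤ σh k := SIFA.sigma_le _ _ _ _ (fun i => (hd0pos i).le)
      (fun i => (hdpos k i).le) (hA2h k).2 (hdiagk k).symm
    linarith
  -- cancel σ
  have hdiagk' : ∀ k,
      blockOf V0 k * Matrix.diagonal d0 * (blockOf V0 k)ᵀ
          + V k * Matrix.diagonal (d k) * (V k)ᵀ
        = blockOf Vh0 k * Matrix.diagonal dh0 * (blockOf Vh0 k)ᵀ
          + Vh k * Matrix.diagonal (dh k) * (Vh k)ᵀ := by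
    intro k
    have h := hdiagk k
    rw [hsig k] at h
    exact add_right_cancel h
  -- factorization of hat joint blocks through non-hat joint blocks and conversely
  have hexk' : ∀ k : Fin K, ∃ k', k ≠ k' := by
    intro k
    by_cases h : k = (⟨0, hK0⟩ : Fin K)
    · exact ⟨⟨1, hK1⟩, by subst h; intro hc; exact absurd (congrArg Fin.val hc) (by simp)⟩
    · exact ⟨⟨0, hK0⟩, h⟩
  have hexA : ∀ k, ∃ Ak : Matrix (Fin r0) (Fin rh0) ℝ, blockOf Vh0 k = blockOf V0 k * Ak := by
    intro k
    obtain ⟨k', hkk'⟩ := hexk' k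
    set R : Matrix (Fin (p k')) (Fin rh0) ℝ :=
      blockOf Vh0 k' * (((blockOf Vh0 k')ᵀ * blockOf Vh0 k')⁻¹
        * Matrix.diagonal (fun i => (dh0 i)⁻¹)) with hRdef
    have hR : (blockOf Vh0 k')ᵀ * R = Matrix.diagonal (fun i => (dh0 i)⁻¹) := by
      rw [hRdef, ← Matrix.mul_assoc, ← Matrix.mul_assoc,
        Matrix.mul_nonsing_inv _ (hGWh0 k'), Matrix.one_mul]
    have hD : Matrix.diagonal dh0 * Matrix.diagonal (fun i => (dh0 i)⁻¹)
        = (1 : Matrix (Fin rh0) (Fin rh0) ℝ) := by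
      rw [Matrix.diagonal_mul_diagonal]
      rw [show (fun i => dh0 i * (dh0 i)⁻¹) = fun _ => (1:ℝ) from
        funext fun i => mul_inv_cancel₀ (hdh0pos i).ne', Matrix.diagonal_one]
    refine ⟨Matrix.diagonal d0 * ((blockOf V0 k')ᵀ * R), ?_⟩
    have h1 := congrArg (fun M => M * R) (hoffk k k' hkk')
    simp only [Matrix.mul_assoc] at h1 ⊢
    rw [hR, hD, Matrix.mul_one] at h1
    exact h1.symm
  have hexAt : ∀ k, ∃ Atk : Matrix (Fin rh0) (Fin r0) ℝ, blockOf V0 k = blockOf Vh0 k * Atk := by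
    intro k
    obtain ⟨k', hkk'⟩ := hexk' k
    set R : Matrix (Fin (p k')) (Fin r0) ℝ :=
      blockOf V0 k' * (((blockOf V0 k')ᵀ * blockOf V0 k')⁻¹
        * Matrix.diagonal (fun i => (d0 i)⁻¹)) with hRdef
    have hR : (blockOf V0 k')ᵀ * R = Matrix.diagonal (fun i => (d0 i)⁻¹) := by
      rw [hRdef, ← Matrix.mul_assoc, ← Matrix.mul_assoc,
        Matrix.mul_nonsing_inv _ (hGW0 k'), Matrix.one_mul]
    have hD : Matrix.diagonal d0 * Matrix.diagonal (fun i => (d0 i)⁻¹)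
        = (1 : Matrix (Fin r0) (Fin r0) ℝ) := by
      rw [Matrix.diagonal_mul_diagonal]
      rw [show (fun i => d0 i * (d0 i)⁻¹) = fun _ => (1:ℝ) from
        funext fun i => mul_inv_cancel₀ (hd0pos i).ne', Matrix.diagonal_one]
    refine ⟨Matrix.diagonal dh0 * ((blockOf Vh0 k')ᵀ * R), ?_⟩
    have h1 := congrArg (fun M => M * R) (hoffk k k' hkk').symm
    simp only [Matrix.mul_assoc] at h1 ⊢
    rw [hR, hD, Matrix.mul_one] at h1
    exact h1.symm
  choose A hA using hexA
  choose At hAt using hexAt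
  have hAAt : ∀ k, A k * At k = 1 := by
    intro k
    refine left_cancel (hGW0 k) ?_
    rw [← Matrix.mul_assoc, ← hA k, ← hAt k, Matrix.mul_one]
  -- the key per-block identities
  have hkey : ∀ k, Matrix.diagonal d0 = A k * Matrix.diagonal dh0 * (A k)ᵀ ∧
      V k * Matrix.diagonal (d k) * (V k)ᵀ = Vh k * Matrix.diagonal (dh k) * (Vh k)ᵀ := by
    intro k
    obtain ⟨hL1W, hL1V, hL2W, hL2V⟩ := left_inv_split _ _ _ (hLN k)
    obtain ⟨hLh1W, hLh1V, hLh2W, hLh2V⟩ := left_inv_split _ _ _ (hLhN k)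
    set L1 : Matrix (Fin r0) (Fin (p k)) ℝ := (L k).submatrix Sum.inl id with hL1def
    set Lh1 : Matrix (Fin rh0) (Fin (p k)) ℝ := (Lh k).submatrix Sum.inl id with hLh1def
    -- (2)
    have h2 := congrArg (fun M => L1 * M * L1ᵀ) (hdiagk' k)
    simp only [Matrix.mul_add, Matrix.add_mul] at h2
    rw [conj_conj, conj_conj, conj_conj, conj_conj, hL1W, hL1V] at h2
    rw [hA k, ← Matrix.mul_assoc, hL1W, Matrix.one_mul] at h2
    simp only [Matrix.one_mul, Matrix.transpose_one, Matrix.mul_one, Matrix.zero_mul,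
      Matrix.mul_zero, add_zero, Matrix.transpose_zero] at h2
    -- h2 : diagonal d0 = A k * diagonal dh0 * (A k)ᵀ + (L1 * Vh k) * diagonal (dh k) * (L1 * Vh k)ᵀ
    -- (3)
    have h3 := congrArg (fun M => Lh1 * M * Lh1ᵀ) (hdiagk' k)
    simp only [Matrix.mul_add, Matrix.add_mul] at h3
    rw [conj_conj, conj_conj, conj_conj, conj_conj, hLh1W, hLh1V] at h3
    rw [hAt k, ← Matrix.mul_assoc, hLh1W, Matrix.one_mul] at h3
    simp only [Matrix.one_mul, Matrix.transpose_one, Matrix.mul_one, Matrix.zero_mul,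
      Matrix.mul_zero, add_zero, Matrix.transpose_zero] at h3
    -- h3 : At k * diagonal d0 * (At k)ᵀ + (Lh1 * V k) * diagonal (d k) * (Lh1 * V k)ᵀ = diagonal dh0
    -- (4): conjugate (3) by A k
    have h4 := congrArg (fun M => A k * M * (A k)ᵀ) h3
    simp only [Matrix.mul_add, Matrix.add_mul] at h4
    rw [conj_conj, conj_conj, hAAt k] at h4
    simp only [Matrix.one_mul, Matrix.transpose_one, Matrix.mul_one] at h4
    -- h4 : diagonal d0 + (A k * (Lh1 * V k)) * diagonal (d k) * _ᵀ = A k * diagonal dh0 * (A k)ᵀ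
    rw [← h4, add_assoc] at h2
    have h5 := left_eq_add.mp h2
    have hC : L1 * Vh k = 0 := by
      rw [add_comm] at h5
      exact conj_add_conj_eq_zero (hdhpos k) (hdpos k) h5
    have hD : A k * (Lh1 * V k) = 0 :=
      conj_add_conj_eq_zero (hdpos k) (hdhpos k) h5
    constructor
    · rw [← h4, hD]
      simp
    · have h6 := hdiagk' k
      rw [hA k] at h6
      rw [show (blockOf V0 k * A k) * Matrix.diagonal dh0 * (blockOf V0 k * A k)ᵀ
          = blockOf V0 k * (A k * Matrix.diagonal dh0 * (A k)ᵀ) * (blockOf V0 k)ᵀ from by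
        simp only [Matrix.transpose_mul, Matrix.mul_assoc]] at h6
      rw [show A k * Matrix.diagonal dh0 * (A k)ᵀ = Matrix.diagonal d0 from by
        rw [← h4, hD]; simp] at h6
      exact add_left_cancel h6
  -- cross relations
  have hcross : ∀ k k', k ≠ k' →
      Matrix.diagonal d0 = A k * Matrix.diagonal dh0 * (A k')ᵀ := by
    intro k k' hne
    have h := hoffk k k' hne
    rw [hA k, hA k'] at h
    have h2 : blockOf V0 k * (Matrix.diagonal d0 * (blockOf V0 k')ᵀ)
        = blockOf V0 k * ((A k * (Matrix.diagonal dh0 * (A k')ᵀ)) * (blockOf V0 k')ᵀ) := by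
      simpa only [Matrix.transpose_mul, Matrix.mul_assoc] using h
    have h3 := left_cancel (hGW0 k) h2
    have h4 := right_cancel (hGW0 k') h3
    rw [h4, Matrix.mul_assoc]
  -- global joint part equality
  have hjointblk : ∀ k k', blockOf V0 k * Matrix.diagonal d0 * (blockOf V0 k')ᵀ
      = blockOf Vh0 k * Matrix.diagonal dh0 * (blockOf Vh0 k')ᵀ := by
    intro k k'
    rw [hA k, hA k']
    rw [show (blockOf V0 k * A k) * Matrix.diagonal dh0 * (blockOf V0 k' * A k')ᵀ
        = blockOf V0 k * (A k * Matrix.diagonal dh0 * (A k')ᵀ) * (blockOf V0 k')ᵀ from by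
      simp only [Matrix.transpose_mul, Matrix.mul_assoc]]
    rcases eq_or_ne k k' with rfl | hne
    · rw [← (hkey k).1]
    · rw [← hcross k k' hne]
  have hjoint : V0 * Matrix.diagonal d0 * V0ᵀ = Vh0 * Matrix.diagonal dh0 * Vh0ᵀ := by
    ext ⟨k, i⟩ ⟨k', j⟩
    exact congrFun (congrFun (hjointblk k k') i) j
  -- spectral uniqueness, global and per block
  obtain ⟨h0, hd0c, s0, hs0pm, hs0⟩ := spectral_unique V0 Vh0 hV0 hVh0 hd0anti hd0pos
    hdh0anti hdh0pos hjoint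
  have hblockspec := fun k => spectral_unique (V k) (Vh k) (hV k) (hVh k) (hdanti k)
    (hdpos k) (hdhanti k) (hdhpos k) (hkey k).2
  choose hrk hdkc s hspm hssub using hblockspec
  -- mean functions
  have hmb : ∀ k x, blockOf V0 k *ᵥ f0 x + V k *ᵥ f k x
      = blockOf Vh0 k *ᵥ fh0 x + Vh k *ᵥ fh k x := by
    intro k x
    funext i
    have h := congrFun (hmean x) ⟨k, i⟩
    simp only [Pi.add_apply] at h
    rw [SIFA.blkdiag_mulVec V _ k i, SIFA.blkdiag_mulVec Vh _ k i] at h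
    exact h
  have hWh0sub : ∀ k, (blockOf Vh0 k).submatrix id (Fin.cast h0.symm)
      = blockOf V0 k * Matrix.diagonal s0 := by
    intro k
    ext i j
    exact congrFun (congrFun hs0 ⟨k, i⟩) j
  have hufin : ∀ k x,
      (f0 x - Matrix.diagonal s0 *ᵥ (fun j => fh0 x (Fin.cast h0.symm j)) = 0) ∧
      (f k x - Matrix.diagonal (s k) *ᵥ (fun j => fh k x (Fin.cast (hrk k).symm j)) = 0) := by
    intro k x
    obtain ⟨hL1W, hL1V, hL2W, hL2V⟩ := left_inv_split _ _ _ (hLN k)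
    have h := hmb k x
    rw [mulVec_reindex h0.symm (blockOf Vh0 k) (fh0 x),
      mulVec_reindex (hrk k).symm (Vh k) (fh k x), hWh0sub k, hssub k,
      ← Matrix.mulVec_mulVec, ← Matrix.mulVec_mulVec] at h
    have hme : blockOf V0 k *ᵥ
          (f0 x - Matrix.diagonal s0 *ᵥ (fun j => fh0 x (Fin.cast h0.symm j)))
        + V k *ᵥ (f k x - Matrix.diagonal (s k) *ᵥ (fun j => fh k x (Fin.cast (hrk k).symm j)))
        = 0 := by
      rw [Matrix.mulVec_sub, Matrix.mulVec_sub, sub_add_sub_comm, h, sub_self]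
    constructor
    · have h2 := congrArg (fun w => ((L k).submatrix Sum.inl id) *ᵥ w) hme
      simp only [Matrix.mulVec_add, Matrix.mulVec_mulVec, hL1W, hL1V, Matrix.one_mulVec,
        Matrix.zero_mulVec, add_zero, Matrix.mulVec_zero] at h2
      exact h2
    · have h2 := congrArg (fun w => ((L k).submatrix Sum.inr id) *ᵥ w) hme
      simp only [Matrix.mulVec_add, Matrix.mulVec_mulVec, hL2W, hL2V, Matrix.one_mulVec,
        Matrix.zero_mulVec, zero_add, Matrix.mulVec_zero] at h2
      exact h2
  refine ⟨h0, hrk, hsig, hd0c, hdkc, s0, s, hs0pm, hspm, hs0, hssub, ?_, ?_⟩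
  · intro x i
    have hu := congrFun ((hufin ⟨0, hK0⟩ x).1) i
    simp only [Pi.sub_apply, Matrix.mulVec_diagonal, Pi.zero_apply, sub_eq_zero] at hu
    rcases hs0pm i with hsi | hsi <;> rw [hsi] at hu ⊢ <;> linarith
  · intro k x i
    have hu := congrFun ((hufin k x).2) i
    simp only [Pi.sub_apply, Matrix.mulVec_diagonal, Pi.zero_apply, sub_eq_zero] at hu
    rcases hspm k i with hsi | hsi <;> rw [hsi] at hu ⊢ <;> linarith
end

section
/- Minimality of the joint rank (Proposition 2.1, second part): Fix K ≥ 2 and block dimensions p_1,…,p_K. Let θ_0 be a parameter set satisfying the basic conditions, condition A1 and condition A2, with joint rank r_0. Then every parameter set θ satisfying the basic conditions (not necessarily A1 or A2) that is observationally equivalent to θ_0 has joint rank at least r_0; that is, its joint loading matrix has at least r_0 columns. -/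
open Matrix

lemma blkdiag_offdiag_mul {K : ℕ} {p r : Fin K → ℕ}
    (V : (k : Fin K) → Matrix (Fin (p k)) (Fin (r k)) ℝ)
    (dd : ((k : Fin K) × Fin (r k)) → ℝ)
    {k0 k1 : Fin K} (h : k0 ≠ k1) (i : Fin (p k0)) (j : Fin (p k1)) :
    (blkdiag V * Matrix.diagonal dd * (blkdiag V)ᵀ) ⟨k0, i⟩ ⟨k1, j⟩ = 0 := by
  rw [Matrix.mul_apply]
  refine Finset.sum_eq_zero fun m _ => ?_
  rw [Matrix.mul_diagonal, Matrix.transpose_apply]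
  by_cases hm : k0 = m.1
  · have h2 : ¬ (k1 = m.1) := fun hc => h (hm.trans hc.symm)
    simp [blkdiag, h2]
  · simp [blkdiag, hm]

/-- Minimality of the joint rank (Proposition 2.1, second part): if `θ₀` satisfies the basic
conditions together with conditions A1 and A2 and has joint rank `r₀`, then every parameter
set satisfying the basic conditions that is observationally equivalent to `θ₀` (equal mean
function `μ⋆` and equal grand covariance `Σ⋆`) has joint rank at least `r₀`. -/
theorem stmt_1 {K q : ℕ} (hK : 2 ≤ K) {p : Fin K → ℕ}
    {r0 : ℕ} {r : Fin K → ℕ} {rh0 : ℕ} {rh : Fin K → ℕ}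
    -- parameter set θ₀
    (V0 : Matrix ((k : Fin K) × Fin (p k)) (Fin r0) ℝ)
    (V : (k : Fin K) → Matrix (Fin (p k)) (Fin (r k)) ℝ)
    (d0 : Fin r0 → ℝ) (d : (k : Fin K) → Fin (r k) → ℝ)
    (σ : Fin K → ℝ)
    (f0 : (Fin q → ℝ) → Fin r0 → ℝ) (f : (k : Fin K) → (Fin q → ℝ) → Fin (r k) → ℝ)
    -- parameter set θ
    (Vh0 : Matrix ((k : Fin K) × Fin (p k)) (Fin rh0) ℝ)
    (Vh : (k : Fin K) → Matrix (Fin (p k)) (Fin (rh k)) ℝ)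
    (dh0 : Fin rh0 → ℝ) (dh : (k : Fin K) → Fin (rh k) → ℝ)
    (σh : Fin K → ℝ)
    (fh0 : (Fin q → ℝ) → Fin rh0 → ℝ) (fh : (k : Fin K) → (Fin q → ℝ) → Fin (rh k) → ℝ)
    -- basic conditions for θ₀
    (hV0 : V0ᵀ * V0 = 1) (hV : ∀ k, (V k)ᵀ * V k = 1)
    (hd0anti : StrictAnti d0) (hd0pos : ∀ i, 0 < d0 i)
    (hdanti : ∀ k, StrictAnti (d k)) (hdpos : ∀ k i, 0 < d k i)
    (hσ : ∀ k, 0 < σ k)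
    -- condition A1 for θ₀: each block of V₀ has full column rank
    (hA1 : ∀ k, (Matrix.of fun (i : Fin (p k)) j => V0 ⟨k, i⟩ j).rank = r0)
    -- condition A2 for θ₀: columns of V₀ₖ and Vₖ are jointly linearly independent,
    -- and r₀ + rₖ < pₖ
    (hA2 : ∀ k, LinearIndependent ℝ
        (fun j => (Matrix.fromCols (Matrix.of fun (i : Fin (p k)) l => V0 ⟨k, i⟩ l)
          (V k))ᵀ j)
      ∧ r0 + r k < p k)
    -- basic conditions for θ
    (hVh0 : Vh0ᵀ * Vh0 = 1) (hVh : ∀ k, (Vh k)ᵀ * Vh k = 1)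
    (hdh0anti : StrictAnti dh0) (hdh0pos : ∀ i, 0 < dh0 i)
    (hdhanti : ∀ k, StrictAnti (dh k)) (hdhpos : ∀ k i, 0 < dh k i)
    (hσh : ∀ k, 0 < σh k)
    -- observational equivalence: equal grand covariance Σ⋆
    (hcov : V0 * Matrix.diagonal d0 * V0ᵀ
        + blkdiag V * Matrix.diagonal (fun j : (k : Fin K) × Fin (r k) => d j.1 j.2)
          * (blkdiag V)ᵀ
        + Matrix.diagonal (fun i : (k : Fin K) × Fin (p k) => σ i.1)
      = Vh0 * Matrix.diagonal dh0 * Vh0ᵀ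
        + blkdiag Vh * Matrix.diagonal (fun j : (k : Fin K) × Fin (rh k) => dh j.1 j.2)
          * (blkdiag Vh)ᵀ
        + Matrix.diagonal (fun i : (k : Fin K) × Fin (p k) => σh i.1))
    -- observational equivalence: equal mean function μ⋆
    (hmean : ∀ x : Fin q → ℝ,
      V0 *ᵥ f0 x + blkdiag V *ᵥ (fun j => f j.1 x j.2)
        = Vh0 *ᵥ fh0 x + blkdiag Vh *ᵥ (fun j => fh j.1 x j.2)) :
    r0 ≤ rh0 := by
  have h0K : 0 < K := by omega
  have h1K : 1 < K := by omega
  set k0 : Fin K := ⟨0, h0K⟩ with hk0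
  set k1 : Fin K := ⟨1, h1K⟩ with hk1
  have hk01 : k0 ≠ k1 := by simp [hk0, hk1, Fin.ext_iff]
  set A : Matrix (Fin (p k0)) (Fin r0) ℝ := Matrix.of fun i j => V0 ⟨k0, i⟩ j with hA
  set B : Matrix (Fin (p k1)) (Fin r0) ℝ := Matrix.of fun i j => V0 ⟨k1, i⟩ j with hB
  set Ah : Matrix (Fin (p k0)) (Fin rh0) ℝ := Matrix.of fun i j => Vh0 ⟨k0, i⟩ j with hAh
  set Bh : Matrix (Fin (p k1)) (Fin rh0) ℝ := Matrix.of fun i j => Vh0 ⟨k1, i⟩ j with hBh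
  have hM : A * Matrix.diagonal d0 * Bᵀ = Ah * Matrix.diagonal dh0 * Bhᵀ := by
    ext i j
    have h := congrFun (congrFun hcov ⟨k0, i⟩) ⟨k1, j⟩
    have hne : (⟨k0, i⟩ : (k : Fin K) × Fin (p k)) ≠ ⟨k1, j⟩ := fun hc =>
      hk01 (congrArg Sigma.fst hc)
    rw [Matrix.add_apply, Matrix.add_apply, Matrix.add_apply, Matrix.add_apply,
      blkdiag_offdiag_mul V _ hk01, blkdiag_offdiag_mul Vh _ hk01,
      Matrix.diagonal_apply_ne _ hne, Matrix.diagonal_apply_ne _ hne,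
      add_zero, add_zero, add_zero, add_zero] at h
    simpa [hA, hB, hAh, hBh, Matrix.mul_apply, Matrix.mul_diagonal] using h
  have hsurj : Function.Surjective (Matrix.diagonal d0 * Bᵀ).mulVecLin := by
    rw [Matrix.mulVecLin_mul]
    refine Function.Surjective.comp (g := (Matrix.diagonal d0).mulVecLin) ?_ ?_
    · intro y
      refine ⟨(Matrix.diagonal fun i => (d0 i)⁻¹).mulVec y, ?_⟩
      funext x
      simp [Matrix.mulVecLin_apply, Matrix.mulVec_diagonal,
        mul_inv_cancel_left₀ (hd0pos x).ne']
    · have hr : (Bᵀ).rank = r0 := by rw [Matrix.rank_transpose]; exact hA1 k1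
      rw [← LinearMap.range_eq_top]
      apply Submodule.eq_top_of_finrank_eq
      rw [Module.finrank_pi]
      simpa [Matrix.rank] using hr
  have hrankM : (A * (Matrix.diagonal d0 * Bᵀ)).rank = r0 := by
    have hr : LinearMap.range (A * (Matrix.diagonal d0 * Bᵀ)).mulVecLin
        = LinearMap.range A.mulVecLin := by
      rw [Matrix.mulVecLin_mul]
      exact LinearMap.range_comp_of_range_eq_top _ (LinearMap.range_eq_top.mpr hsurj)
    rw [Matrix.rank, hr, ← Matrix.rank]
    exact hA1 k0
  calc r0 = (A * Matrix.diagonal d0 * Bᵀ).rank := by rw [Matrix.mul_assoc]; exact hrankM.symm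
    _ = (Ah * Matrix.diagonal dh0 * Bhᵀ).rank := by rw [hM]
    _ ≤ (Matrix.diagonal dh0 * Bhᵀ).rank := by
        rw [Matrix.mul_assoc]; exact Matrix.rank_mul_le_right _ _
    _ ≤ (Matrix.diagonal dh0 : Matrix (Fin rh0) (Fin rh0) ℝ).rank :=
        Matrix.rank_mul_le_left _ _
    _ ≤ rh0 := Matrix.rank_le_width _
end

section
/- Equal noise variance step: Let p > 0, and let W ∈ ℝ^{p×r} and Ŵ ∈ ℝ^{p×r̂} have full column rank with r < p and r̂ < p. Let D ∈ ℝ^{r×r} and D̂ ∈ ℝ^{r̂×r̂} be symmetric positive definite, and let σ², τ² > 0. If W D Wᵀ + σ² I_p = Ŵ D̂ Ŵᵀ + τ² I_p, then σ² = τ² (equivalently, σ² equals the smallest eigenvalue of the common matrix), and consequently W D Wᵀ = Ŵ D̂ Ŵᵀ. -/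
open Matrix

lemma exists_ker_vec {p k : ℕ} (hk : k < p) (M : Matrix (Fin p) (Fin k) ℝ)
    (hM : M.rank = k) : ∃ x : Fin p → ℝ, x ≠ 0 ∧ Mᵀ *ᵥ x = 0 := by
  have hrk : Mᵀ.rank = k := by rw [Matrix.rank_transpose, hM]
  have hker : LinearMap.ker Mᵀ.mulVecLin ≠ ⊥ := by
    intro hbot
    have := LinearMap.finrank_range_add_finrank_ker Mᵀ.mulVecLin
    rw [hbot, finrank_bot] at this
    simp only [Matrix.rank] at hrk
    rw [hrk] at this
    simp [Module.finrank_fin_fun] at this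
    omega
  obtain ⟨x, hx, hx0⟩ := Submodule.exists_mem_ne_zero_of_ne_bot hker
  exact ⟨x, hx0, hx⟩

lemma le_aux {p r rhat : ℕ}
    (W : Matrix (Fin p) (Fin r) ℝ) (What : Matrix (Fin p) (Fin rhat) ℝ)
    (D : Matrix (Fin r) (Fin r) ℝ) (Dhat : Matrix (Fin rhat) (Fin rhat) ℝ)
    (hDhat : Dhat.PosDef)
    (σ2 τ2 : ℝ)
    (heq : W * D * Wᵀ + σ2 • (1 : Matrix (Fin p) (Fin p) ℝ)
         = What * Dhat * Whatᵀ + τ2 • (1 : Matrix (Fin p) (Fin p) ℝ))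
    (x : Fin p → ℝ) (hx0 : x ≠ 0) (hx : Wᵀ *ᵥ x = 0) : τ2 ≤ σ2 := by
  have h1 : (W * D * Wᵀ) *ᵥ x = 0 := by
    rw [Matrix.mul_assoc, ← Matrix.mulVec_mulVec, ← Matrix.mulVec_mulVec, hx]
    simp
  have h2 := congrArg (· *ᵥ x) heq
  simp only [Matrix.add_mulVec, Matrix.smul_mulVec, Matrix.one_mulVec, h1,
    zero_add] at h2
  -- h2 : σ2 • x = (What * Dhat * Whatᵀ) *ᵥ x + τ2 • x
  have h3 : (What * Dhat * Whatᵀ) *ᵥ x = (σ2 - τ2) • x := by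
    rw [sub_smul, h2]; abel
  have h4 : x ⬝ᵥ ((What * Dhat * Whatᵀ) *ᵥ x) = (σ2 - τ2) * (x ⬝ᵥ x) := by
    rw [h3, dotProduct_smul, smul_eq_mul]
  have h5 : 0 ≤ x ⬝ᵥ ((What * Dhat * Whatᵀ) *ᵥ x) := by
    rw [Matrix.mul_assoc, ← Matrix.mulVec_mulVec, ← Matrix.mulVec_mulVec,
      dotProduct_mulVec, ← Matrix.mulVec_transpose]
    have := hDhat.posSemidef.dotProduct_mulVec_nonneg (Whatᵀ *ᵥ x)
    simpa using this
  have h6 : 0 < x ⬝ᵥ x := by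
    have hns : x ⬝ᵥ x ≠ 0 := fun h => hx0 (dotProduct_self_eq_zero.mp h)
    have : (0:ℝ) ≤ x ⬝ᵥ x := by
      simpa using dotProduct_self_star_nonneg x
    exact lt_of_le_of_ne this (Ne.symm hns)
  nlinarith [h4, h5, h6]

/-- Equal noise variance step: if two "low-rank plus spherical noise" decompositions of the
same matrix agree, the noise variances agree, and hence the low-rank parts agree. -/
theorem stmt_2 {p r rhat : ℕ} (hp : 0 < p) (hr : r < p) (hrhat : rhat < p)
    (W : Matrix (Fin p) (Fin r) ℝ) (What : Matrix (Fin p) (Fin rhat) ℝ)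
    (hW : W.rank = r) (hWhat : What.rank = rhat)
    (D : Matrix (Fin r) (Fin r) ℝ) (Dhat : Matrix (Fin rhat) (Fin rhat) ℝ)
    (hD : D.PosDef) (hDhat : Dhat.PosDef)
    (σ2 τ2 : ℝ) (hσ : 0 < σ2) (hτ : 0 < τ2)
    (heq : W * D * Wᵀ + σ2 • (1 : Matrix (Fin p) (Fin p) ℝ)
         = What * Dhat * Whatᵀ + τ2 • (1 : Matrix (Fin p) (Fin p) ℝ)) :
    σ2 = τ2 ∧ W * D * Wᵀ = What * Dhat * Whatᵀ := by
  obtain ⟨x, hx0, hx⟩ := exists_ker_vec hr W hW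
  obtain ⟨y, hy0, hy⟩ := exists_ker_vec hrhat What hWhat
  have h1 : τ2 ≤ σ2 := le_aux W What D Dhat hDhat σ2 τ2 heq x hx0 hx
  have h2 : σ2 ≤ τ2 := le_aux What W Dhat D hD τ2 σ2 heq.symm y hy0 hy
  have hst : σ2 = τ2 := le_antisymm h2 h1
  refine ⟨hst, ?_⟩
  rw [hst] at heq
  exact add_right_cancel heq
end

section
/- Vanishing of the correction matrix: Let A and C be real symmetric p×p matrices such that the column space of A and the column space of C intersect trivially (their intersection is {0}). If rank(A + C) ≤ rank(A), then C = 0. (In the SIFA identifiability proof this is applied with A = V_1 Σ_1 V_1ᵀ positive semidefinite of rank r_1, C the difference of joint blocks with column space contained in the column space of V_{0,1}, and A + C = V̂_1 Σ̂_1 V̂_1ᵀ of rank r_1.) -/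
open Matrix Module

noncomputable def eqv (p : ℕ) : (Fin p → ℝ) ≃ₗ[ℝ] EuclideanSpace ℝ (Fin p) :=
  (WithLp.linearEquiv 2 ℝ (Fin p → ℝ)).symm

lemma finrank_map_eqv {p : ℕ} (S : Submodule ℝ (Fin p → ℝ)) :
    Module.finrank ℝ (S.map (eqv p).toLinearMap) = Module.finrank ℝ S :=
  LinearEquiv.finrank_map_eq (eqv p) S

lemma ortho_aux {p : ℕ} (M : Matrix (Fin p) (Fin p) ℝ) (hM : M.IsSymm) :
    ((LinearMap.range M.mulVecLin).map (eqv p).toLinearMap)ᗮ = (LinearMap.ker M.mulVecLin).map (eqv p).toLinearMap := by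
  ext x
  constructor
  · intro hx
    refine ⟨(eqv p).symm x, ?_, by simp⟩
    have h : ∀ u : Fin p → ℝ, (M.mulVec u) ⬝ᵥ ((eqv p).symm x) = 0 := by
      intro u
      have := hx (eqv p (M.mulVec u)) ⟨M.mulVec u, ⟨u, rfl⟩, rfl⟩
      simpa [eqv, PiLp.inner_apply, dotProduct, mul_comm] using this
    have h2 : M.mulVec ((eqv p).symm x) = 0 := by
      apply dotProduct_eq_zero
      intro w
      rw [dotProduct_comm, Matrix.dotProduct_mulVec, ← Matrix.mulVec_transpose, hM]
      exact h w
    simpa [Matrix.mulVecLin_apply] using h2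
  · rintro ⟨y, hy, rfl⟩
    have hy' : M.mulVec y = 0 := hy
    intro z hz
    rcases hz with ⟨w, ⟨u, rfl⟩, rfl⟩
    have : M.mulVec u ⬝ᵥ y = 0 := by
      rw [dotProduct_comm, Matrix.dotProduct_mulVec, ← Matrix.mulVec_transpose, hM, hy',
        zero_dotProduct]
    simpa [eqv, PiLp.inner_apply, dotProduct, mul_comm] using this

/-- Vanishing of the correction matrix: if `A` and `C` are real symmetric `p×p` matrices whose
column spaces intersect trivially and `rank(A + C) ≤ rank(A)`, then `C = 0`. -/
theorem stmt_5 {p : ℕ} (A C : Matrix (Fin p) (Fin p) ℝ)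
    (hA : A.IsSymm) (hC : C.IsSymm)
    (hint : LinearMap.range A.mulVecLin ⊓ LinearMap.range C.mulVecLin = ⊥)
    (hrank : (A + C).rank ≤ A.rank) : C = 0 := by
  classical
  set e := eqv p
  -- kernel of A + C is the intersection of kernels
  have hker : LinearMap.ker (A + C).mulVecLin = LinearMap.ker A.mulVecLin ⊓ LinearMap.ker C.mulVecLin := by
    apply le_antisymm
    · intro x hx
      have hx' : A.mulVec x + C.mulVec x = 0 := by
        simpa [Matrix.add_mulVec] using hx
      have hmem : A.mulVec x ∈ LinearMap.range A.mulVecLin ⊓ LinearMap.range C.mulVecLin := by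
        refine ⟨⟨x, rfl⟩, ⟨-x, ?_⟩⟩
        simp only [Matrix.mulVecLin_apply, Matrix.mulVec_neg]
        linear_combination (norm := module) -hx'
      rw [hint] at hmem
      have hAx : A.mulVec x = 0 := hmem
      have hCx : C.mulVec x = 0 := by
        have := hx'
        rw [hAx, zero_add] at this
        exact this
      exact ⟨hAx, hCx⟩
    · rintro x ⟨h1, h2⟩
      have h1' : A.mulVec x = 0 := h1
      have h2' : C.mulVec x = 0 := h2
      show (A + C).mulVec x = 0
      rw [Matrix.add_mulVec, h1', h2', add_zero]
  -- move everything to EuclideanSpace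
  have hAC : (A + C).IsSymm := hA.add hC
  have horth : ((LinearMap.range A.mulVecLin).map e.toLinearMap ⊔ (LinearMap.range C.mulVecLin).map e.toLinearMap)ᗮ
      = (LinearMap.ker (A + C).mulVecLin).map e.toLinearMap := by
    rw [← Submodule.inf_orthogonal, ortho_aux A hA, ortho_aux C hC, hker, Submodule.map_inf _ e.injective]
  have hbot : (LinearMap.range A.mulVecLin).map e.toLinearMap ⊓ (LinearMap.range C.mulVecLin).map e.toLinearMap = ⊥ := by
    rw [← Submodule.map_inf _ e.injective, hint, Submodule.map_bot]
  -- dimension counting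
  have d1 : finrank ℝ ((LinearMap.range A.mulVecLin).map e.toLinearMap ⊔ (LinearMap.range C.mulVecLin).map e.toLinearMap : Submodule ℝ (EuclideanSpace ℝ (Fin p)))
      + finrank ℝ ((LinearMap.ker (A + C).mulVecLin).map e.toLinearMap) = p := by
    have := Submodule.finrank_add_finrank_orthogonal
      (K := (LinearMap.range A.mulVecLin).map e.toLinearMap ⊔ (LinearMap.range C.mulVecLin).map e.toLinearMap)
    rw [horth] at this
    simpa [finrank_euclideanSpace] using this
  have d2 : finrank ℝ ((LinearMap.range A.mulVecLin).map e.toLinearMap ⊔ (LinearMap.range C.mulVecLin).map e.toLinearMap : Submodule ℝ (EuclideanSpace ℝ (Fin p)))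
      = A.rank + C.rank := by
    have := Submodule.finrank_sup_add_finrank_inf_eq
      ((LinearMap.range A.mulVecLin).map e.toLinearMap) ((LinearMap.range C.mulVecLin).map e.toLinearMap)
    rw [hbot] at this
    simp only [finrank_bot, add_zero] at this
    rw [this, finrank_map_eqv, finrank_map_eqv]
    rfl
  have d3 : (A + C).rank + finrank ℝ (LinearMap.ker (A + C).mulVecLin) = p := by
    have := LinearMap.finrank_range_add_finrank_ker (A + C).mulVecLin
    simpa [Matrix.rank] using this
  have d4 : finrank ℝ ((LinearMap.ker (A + C).mulVecLin).map e.toLinearMap)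
      = finrank ℝ (LinearMap.ker (A + C).mulVecLin) := finrank_map_eqv _
  have hCrank : C.rank = 0 := by omega
  -- conclude C = 0
  have hrange : LinearMap.range C.mulVecLin = ⊥ := Submodule.finrank_eq_zero.mp hCrank
  have hzero : ∀ v, C.mulVec v = 0 := by
    intro v
    have : C.mulVecLin v ∈ LinearMap.range C.mulVecLin := ⟨v, rfl⟩
    rw [hrange] at this
    simpa using this
  ext i j
  have := congrFun (hzero (Pi.single j 1)) i
  simpa [Matrix.mulVec_single_one] using this
end

section
/- Orthogonal Procrustes solution: Let r ≤ p, and let M ∈ ℝ^{p×r} have the decomposition M = L D Rᵀ, where L ∈ ℝ^{p×r} satisfies LᵀL = I_r, R ∈ ℝ^{r×r} is orthogonal, and D ∈ ℝ^{r×r} is diagonal with strictly positive diagonal entries. Then for every V ∈ ℝ^{p×r} with VᵀV = I_r, one has tr(Vᵀ M) ≤ tr(D), with equality if and only if V = L Rᵀ. In particular, V = L Rᵀ is the unique maximizer of V ↦ tr(Vᵀ M) over matrices with orthonormal columns. -/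
open Matrix

/-- Orthogonal Procrustes solution: with `M = L D Rᵀ`, `LᵀL = I`, `R` orthogonal and `D`
diagonal with strictly positive entries, for every `V` with orthonormal columns one has
`tr(Vᵀ M) ≤ tr(D)`, with equality if and only if `V = L Rᵀ`. -/
theorem stmt_9 {p r : ℕ} (hrp : r ≤ p)
    (L : Matrix (Fin p) (Fin r) ℝ) (R : Matrix (Fin r) (Fin r) ℝ)
    (d : Fin r → ℝ)
    (hL : Lᵀ * L = 1) (hR1 : Rᵀ * R = 1) (hR2 : R * Rᵀ = 1)
    (hd : ∀ i, 0 < d i)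
    (M : Matrix (Fin p) (Fin r) ℝ) (hM : M = L * Matrix.diagonal d * Rᵀ) :
    ∀ V : Matrix (Fin p) (Fin r) ℝ, Vᵀ * V = 1 →
      (Vᵀ * M).trace ≤ (Matrix.diagonal d).trace ∧
      ((Vᵀ * M).trace = (Matrix.diagonal d).trace ↔ V = L * Rᵀ) := by
  intro V hV
  set W := V * R with hW
  have hWW : Wᵀ * W = 1 := by
    have : Wᵀ * W = Rᵀ * (Vᵀ * V) * R := by
      simp [hW, Matrix.transpose_mul, Matrix.mul_assoc]
    rw [this, hV, Matrix.mul_one, hR1]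
  -- unit columns of W and L
  have hWcol : ∀ i, (∑ k, W k i * W k i) = 1 := by
    intro i
    have := congrFun (congrFun hWW i) i
    simpa [Matrix.mul_apply, Matrix.one_apply] using this
  have hLcol : ∀ i, (∑ k, L k i * L k i) = 1 := by
    intro i
    have := congrFun (congrFun hL i) i
    simpa [Matrix.mul_apply, Matrix.one_apply] using this
  set b : Fin r → ℝ := fun i => (Wᵀ * L) i i with hb
  have hkey : ∀ i, (∑ k, (W k i - L k i) ^ 2) = 2 - 2 * b i := by
    intro i
    have hbi : b i = ∑ k, W k i * L k i := by
      simp [hb, Matrix.mul_apply, Matrix.transpose_apply]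
    have expand : ∀ k, (W k i - L k i) ^ 2
        = W k i * W k i - 2 * (W k i * L k i) + L k i * L k i := by
      intro k; ring
    rw [Finset.sum_congr rfl fun k _ => expand k]
    rw [Finset.sum_add_distrib, Finset.sum_sub_distrib, ← Finset.mul_sum,
      hWcol i, hLcol i, ← hbi]
    ring
  have hble : ∀ i, b i ≤ 1 := by
    intro i
    have h0 : (0 : ℝ) ≤ ∑ k, (W k i - L k i) ^ 2 :=
      Finset.sum_nonneg fun k _ => sq_nonneg _
    rw [hkey i] at h0
    linarith
  -- the trace identity
  have htr : (Vᵀ * M).trace = ∑ i, b i * d i := by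
    rw [hM]
    have h1 : Vᵀ * (L * Matrix.diagonal d * Rᵀ)
        = (Vᵀ * L * Matrix.diagonal d) * Rᵀ := by
      simp [Matrix.mul_assoc]
    rw [h1, Matrix.trace_mul_comm]
    have h2 : Rᵀ * (Vᵀ * L * Matrix.diagonal d) = Wᵀ * L * Matrix.diagonal d := by
      simp [hW, Matrix.transpose_mul, Matrix.mul_assoc]
    rw [h2]
    simp [Matrix.trace, Matrix.diag, Matrix.mul_diagonal, hb]
  have htrD : (Matrix.diagonal d).trace = ∑ i, d i := by
    simp [Matrix.trace, Matrix.diag]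
  have hle : (Vᵀ * M).trace ≤ (Matrix.diagonal d).trace := by
    rw [htr, htrD]
    refine Finset.sum_le_sum fun i _ => ?_
    calc b i * d i ≤ 1 * d i := mul_le_mul_of_nonneg_right (hble i) (hd i).le
    _ = d i := one_mul _
  refine ⟨hle, ?_, ?_⟩
  · intro heq
    rw [htr, htrD] at heq
    have hsum0 : ∑ i, (d i - b i * d i) = 0 := by
      rw [Finset.sum_sub_distrib, heq, sub_self]
    have hterm : ∀ i ∈ Finset.univ, (0 : ℝ) ≤ d i - b i * d i := by
      intro i _
      have : b i * d i ≤ d i := by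
        calc b i * d i ≤ 1 * d i := mul_le_mul_of_nonneg_right (hble i) (hd i).le
        _ = d i := one_mul _
      linarith
    have hzero := (Finset.sum_eq_zero_iff_of_nonneg hterm).mp hsum0
    have hb1 : ∀ i, b i = 1 := by
      intro i
      have := hzero i (Finset.mem_univ i)
      have hdne := (hd i).ne'
      have : d i * (1 - b i) = 0 := by linarith
      rcases mul_eq_zero.mp this with h | h
      · exact absurd h hdne
      · linarith
    have hWL : W = L := by
      ext k i
      have h0 : (∑ k, (W k i - L k i) ^ 2) = 0 := by
        rw [hkey i, hb1 i]; ring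
      have := (Finset.sum_eq_zero_iff_of_nonneg
        (fun k _ => sq_nonneg (W k i - L k i))).mp h0 k (Finset.mem_univ k)
      have := pow_eq_zero_iff (n := 2) (by norm_num) |>.mp this
      linarith [this]
    have : V = W * Rᵀ := by
      rw [hW, Matrix.mul_assoc, hR2, Matrix.mul_one]
    rw [this, hWL]
  · intro hVLR
    have hWL : W = L := by
      rw [hW, hVLR, Matrix.mul_assoc, hR1, Matrix.mul_one]
    rw [htr, htrD]
    refine Finset.sum_congr rfl fun i _ => ?_
    have : b i = 1 := by
      have := congrFun (congrFun hL i) i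
      simp only [hb, hWL]
      simpa [Matrix.one_apply] using this
    rw [this, one_mul]
end

section
/- Weighted trace inequality for matrices with orthonormal columns: Let A, B ∈ ℝ^{p×r} satisfy AᵀA = BᵀB = I_r, and let D ∈ ℝ^{r×r} be diagonal with strictly positive diagonal entries. Then every diagonal entry of AᵀB is at most 1, hence tr(D AᵀB) ≤ tr(D), and equality tr(D AᵀB) = tr(D) holds if and only if A = B. -/
open Matrix

/-- Weighted trace inequality for matrices with orthonormal columns: if `AᵀA = BᵀB = I` and
`D` is diagonal with strictly positive entries, then every diagonal entry of `AᵀB` is at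
most `1`, hence `tr(D AᵀB) ≤ tr(D)`, with equality if and only if `A = B`. -/
theorem stmt_10 {p r : ℕ} (A B : Matrix (Fin p) (Fin r) ℝ)
    (hA : Aᵀ * A = 1) (hB : Bᵀ * B = 1)
    (d : Fin r → ℝ) (hd : ∀ i, 0 < d i) :
    (∀ i, (Aᵀ * B) i i ≤ 1) ∧
    (Matrix.diagonal d * (Aᵀ * B)).trace ≤ (Matrix.diagonal d).trace ∧
    ((Matrix.diagonal d * (Aᵀ * B)).trace = (Matrix.diagonal d).trace ↔ A = B) := by
  have hAi : ∀ i, ∑ k, A k i * A k i = 1 := by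
    intro i
    have := congrFun (congrFun hA i) i
    simpa [Matrix.mul_apply, Matrix.transpose_apply, Matrix.one_apply] using this
  have hBi : ∀ i, ∑ k, B k i * B k i = 1 := by
    intro i
    have := congrFun (congrFun hB i) i
    simpa [Matrix.mul_apply, Matrix.transpose_apply, Matrix.one_apply] using this
  have key : ∀ i, ∑ k, (A k i - B k i) ^ 2 = 2 - 2 * (Aᵀ * B) i i := by
    intro i
    have expand : ∑ k, (A k i - B k i) ^ 2
        = (∑ k, A k i * A k i) - 2 * (∑ k, A k i * B k i) + ∑ k, B k i * B k i := by
      rw [Finset.mul_sum, ← Finset.sum_sub_distrib, ← Finset.sum_add_distrib]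
      apply Finset.sum_congr rfl
      intro k _
      ring
    simp only [Matrix.mul_apply, Matrix.transpose_apply]
    rw [expand, hAi i, hBi i]
    ring
  have hdiag : ∀ i, (Aᵀ * B) i i ≤ 1 := by
    intro i
    have hnn : (0:ℝ) ≤ ∑ k, (A k i - B k i) ^ 2 :=
      Finset.sum_nonneg fun k _ => sq_nonneg _
    rw [key i] at hnn
    linarith
  have htr : ∀ M : Matrix (Fin r) (Fin r) ℝ,
      (Matrix.diagonal d * M).trace = ∑ i, d i * M i i := by
    intro M
    simp [Matrix.trace, Matrix.diag, Matrix.diagonal_mul]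
  have htrd : (Matrix.diagonal d).trace = ∑ i, d i := by
    simp [Matrix.trace, Matrix.diag]
  have hterm : ∀ i ∈ Finset.univ, d i * (Aᵀ * B) i i ≤ d i := by
    intro i _
    calc d i * (Aᵀ * B) i i ≤ d i * 1 :=
          mul_le_mul_of_nonneg_left (hdiag i) (hd i).le
      _ = d i := mul_one _
  refine ⟨hdiag, ?_, ?_⟩
  · rw [htr, htrd]
    exact Finset.sum_le_sum hterm
  · constructor
    · intro heq
      rw [htr, htrd] at heq
      have hall := (Finset.sum_eq_sum_iff_of_le hterm).mp heq
      ext k i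
      have h1 : (Aᵀ * B) i i = 1 := by
        have := hall i (Finset.mem_univ i)
        have hdi := hd i
        nlinarith
      have h0 : ∑ j, (A j i - B j i) ^ 2 = 0 := by
        rw [key i, h1]; ring
      have := (Finset.sum_eq_zero_iff_of_nonneg
        (fun j _ => sq_nonneg (A j i - B j i))).mp h0 k (Finset.mem_univ k)
      have := pow_eq_zero_iff (n := 2) (by norm_num) |>.mp this
      linarith [sub_eq_zero.mp this]
    · intro h
      subst h
      rw [hA]
      simp
end

section
/- Non-identifiability under the basic conditions alone (construction of Example 1): Fix K = 2 and suppose r_1 ≥ 1. Let V_0 ∈ ℝ^{(p_1+p_2)×r_0}, V_1 ∈ ℝ^{p_1×r_1}, V_2 ∈ ℝ^{p_2×r_2}, let Σ_0, Σ_1, Σ_2 be diagonal with strictly positive diagonal entries, and let f_0, f_1, f_2 be the mean functions. Write v = first column of V_1, λ = first diagonal entry of Σ_1, g = first component of f_1, and let V_1', Σ_1', f_1' be the remaining columns, diagonal entries, and components. Define Ṽ_0 = (V_0, (vᵀ, 0ᵀ)ᵀ) ∈ ℝ^{(p_1+p_2)×(r_0+1)}, Σ̃_0 = blkdiag(Σ_0,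 λ), and f̃_0 = (f_0, g). Then (i) Ṽ_0 Σ̃_0 Ṽ_0ᵀ + blkdiag(V_1', V_2) · blkdiag(Σ_1', Σ_2) · blkdiag(V_1', V_2)ᵀ = V_0 Σ_0 V_0ᵀ + blkdiag(V_1, V_2) · blkdiag(Σ_1, Σ_2) · blkdiag(V_1, V_2)ᵀ, and (ii) Ṽ_0 f̃_0(x) + blkdiag(V_1', V_2)(f_1'(x)ᵀ, f_2(x)ᵀ)ᵀ = V_0 f_0(x) + blkdiag(V_1, V_2)(f_1(x)ᵀ, f_2(x)ᵀ)ᵀ for every x ∈ ℝ^q. Hence moving the first individual component of block 1 into the joint structure leaves the grand covariance Σ⋆ and the mean function μ⋆ unchanged. -/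
open Matrix

theorem cstar_hmul_eq_mul {l m n : Type*} [Fintype m] (M : Matrix l m ℝ) (N : Matrix m n ℝ) :
    @HMul.hMul (Matrix l m ℝ) (Matrix m n ℝ) (Matrix l n ℝ)
      (@CStarMatrix.instHMulOfFintypeOfMulOfAddCommMonoid m n ℝ l _ _ _) M N = M * N := rfl

/-- Non-identifiability under the basic conditions alone (Example 1, K = 2): moving the first
individual component of block 1 (with `r₁ ≥ 1`, encoded by using `r₁ + 1` columns) into the
joint structure leaves both the grand covariance `Σ⋆` and the mean function `μ⋆` unchanged. -/
theorem stmt_14 {p1 p2 r0 r1 r2 q : ℕ}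
    (V0 : Matrix (Fin p1 ⊕ Fin p2) (Fin r0) ℝ)
    (V1 : Matrix (Fin p1) (Fin (r1 + 1)) ℝ)
    (V2 : Matrix (Fin p2) (Fin r2) ℝ)
    (d0 : Fin r0 → ℝ) (d1 : Fin (r1 + 1) → ℝ) (d2 : Fin r2 → ℝ)
    (hd0 : ∀ i, 0 < d0 i) (hd1 : ∀ i, 0 < d1 i) (hd2 : ∀ i, 0 < d2 i)
    (f0 : (Fin q → ℝ) → Fin r0 → ℝ) (f1 : (Fin q → ℝ) → Fin (r1 + 1) → ℝ)
    (f2 : (Fin q → ℝ) → Fin r2 → ℝ) :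
    -- the padded first column of `V1`, as a joint loading column
    let v : Fin p1 ⊕ Fin p2 → ℝ := Sum.elim (fun i => V1 i 0) (fun _ => 0)
    -- the enlarged joint loading matrix `Ṽ₀ = (V₀, (vᵀ, 0ᵀ)ᵀ)`
    let Vt0 : Matrix (Fin p1 ⊕ Fin p2) (Fin r0 ⊕ Fin 1) ℝ :=
      Matrix.fromCols V0 (Matrix.of fun i _ => v i)
    -- the remaining individual loadings of block 1
    let V1' : Matrix (Fin p1) (Fin r1) ℝ := V1.submatrix id Fin.succ
    -- (i) the grand covariance (minus the common noise term) is unchanged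
    ((Vt0 * Matrix.diagonal (Sum.elim d0 fun _ => d1 0) : Matrix (Fin p1 ⊕ Fin p2) (Fin r0 ⊕ Fin 1) ℝ) * Vt0ᵀ
        + (Matrix.fromBlocks V1' 0 0 V2
          * Matrix.diagonal (Sum.elim (fun j => d1 j.succ) d2) : Matrix (Fin p1 ⊕ Fin p2) (Fin r1 ⊕ Fin r2) ℝ)
          * (Matrix.fromBlocks V1' 0 0 V2)ᵀ
      = V0 * Matrix.diagonal d0 * V0ᵀ
        + Matrix.fromBlocks V1 0 0 V2 * Matrix.diagonal (Sum.elim d1 d2)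
          * (Matrix.fromBlocks V1 0 0 V2)ᵀ) ∧
    -- (ii) the mean function is unchanged
    (∀ x : Fin q → ℝ,
      Vt0 *ᵥ Sum.elim (f0 x) (fun _ => f1 x 0)
          + Matrix.fromBlocks V1' 0 0 V2 *ᵥ Sum.elim (fun j => f1 x j.succ) (f2 x)
        = V0 *ᵥ f0 x + Matrix.fromBlocks V1 0 0 V2 *ᵥ Sum.elim (f1 x) (f2 x)) := by
  intro v Vt0 V1'
  constructor
  · ext i j
    rcases i with i | i <;> rcases j with j | j <;>
      simp [Vt0, V1', v, cstar_hmul_eq_mul, Matrix.mul_apply, Matrix.diagonal, Fintype.sum_sum_type,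
        Fin.sum_univ_succ, Finset.mul_sum, Finset.sum_mul, mul_comm, mul_assoc, mul_left_comm, add_comm, add_assoc, add_left_comm]
  · intro x
    funext i
    rcases i with i | i <;>
      simp [Vt0, V1', v, Matrix.mulVec, dotProduct, Fintype.sum_sum_type,
        Fin.sum_univ_succ, add_comm, add_assoc, add_left_comm]
end
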